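/- Let n = 9 and let j be any element of the set {170,171,172,173,174,175} ∪ {178,179,…,187} ∪ {202,203,…,207} ∪ {210,211,…,219} ∪ {226,227,…,230} ∪ {232,233,234} (40 indices in total). Then for every a ∈ Q, |ε_j a| ≤ ‖a‖. -/

import Mathlib

/-- The sign vector `ε_i ∈ {+1,-1}^9`: the `m`-th coordinate (zero-based `m`)
is `+1` iff the binary digit of `i` at position `8 - m` is `0`. -/
def eps (i : ℕ) : Fin 9 → ℝ := fun m => if Nat.testBit i (8 - (m : ℕ)) then -1 else 1

/-- The cone `Q = {a : a₁ ≥ a₂ ≥ ⋯ ≥ a₉ ≥ 0}`. -/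
def inQ (a : Fin 9 → ℝ) : Prop :=
  (∀ i j : Fin 9, i ≤ j → a j ≤ a i) ∧ ∀ i, 0 ≤ a i

lemma sum9' (f : Fin 9 → ℝ) :
    ∑ i, f i = f 0 + f 1 + f 2 + f 3 + f 4 + f 5 + f 6 + f 7 + f 8 := by
  simp [Fin.sum_univ_succ]
  norm_num [Fin.succ, Fin.ext_iff]
  ring

set_option maxHeartbeats 4000000 in
theorem stmt_19 (j : ℕ)
    (hj : j ∈ ({170, 171, 172, 173, 174, 175,
                178, 179, 180, 181, 182, 183, 184, 185, 186, 187,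
                202, 203, 204, 205, 206, 207,
                210, 211, 212, 213, 214, 215, 216, 217, 218, 219,
                226, 227, 228, 229, 230,
                232, 233, 234} : Finset ℕ))
    (a : Fin 9 → ℝ) (ha : inQ a) :
    |∑ i, eps j i * a i| ≤ Real.sqrt (∑ i, a i ^ 2) := by
  obtain ⟨hm, hn⟩ := ha
  have d0 : (0:ℝ) ≤ a 0 - a 1 := sub_nonneg.2 (hm 0 1 (by decide))
  have d1 : (0:ℝ) ≤ a 1 - a 2 := sub_nonneg.2 (hm 1 2 (by decide))
  have d2 : (0:ℝ) ≤ a 2 - a 3 := sub_nonneg.2 (hm 2 3 (by decide))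
  have d3 : (0:ℝ) ≤ a 3 - a 4 := sub_nonneg.2 (hm 3 4 (by decide))
  have d4 : (0:ℝ) ≤ a 4 - a 5 := sub_nonneg.2 (hm 4 5 (by decide))
  have d5 : (0:ℝ) ≤ a 5 - a 6 := sub_nonneg.2 (hm 5 6 (by decide))
  have d6 : (0:ℝ) ≤ a 6 - a 7 := sub_nonneg.2 (hm 6 7 (by decide))
  have d7 : (0:ℝ) ≤ a 7 - a 8 := sub_nonneg.2 (hm 7 8 (by decide))
  have d8 : (0:ℝ) ≤ a 8 := hn 8
  have key : (∑ i, eps j i * a i) ^ 2 ≤ ∑ i, a i ^ 2 := by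
    fin_cases hj <;>
    · rw [sum9', sum9']
      simp only [eps]
      simp (config := { decide := true }) only [Fin.isValue]
      norm_num
      linarith [mul_nonneg d0 d0, mul_nonneg d0 d1, mul_nonneg d0 d2, mul_nonneg d0 d3, mul_nonneg d0 d4, mul_nonneg d0 d5, mul_nonneg d0 d6, mul_nonneg d0 d7, mul_nonneg d0 d8, mul_nonneg d1 d1, mul_nonneg d1 d2, mul_nonneg d1 d3, mul_nonneg d1 d4, mul_nonneg d1 d5, mul_nonneg d1 d6, mul_nonneg d1 d7, mul_nonneg d1 d8, mul_nonneg d2 d2, mul_nonneg d2 d3, mul_nonneg d2 d4, mul_nonneg d2 d5, mul_nonneg d2 d6, mul_nonneg d2 d7, mul_nonneg d2 d8, mul_nonneg d3 d3, mul_nonneg d3 d4, mul_nonneg d3 d5, mul_nonneg d3 d6, mul_nonneg d3 d7, mul_nonneg d3 d8, mul_nonneg d4 d4, mul_nonneg d4 d5, mul_nonneg d4 d6, mul_nonneg d4 d7, mul_nonneg d4 d8, mul_nonneg d5 d5, mul_nonneg d5 d6, mul_nonneg d5 d7, mul_nonneg d5 d8, mul_nonneg d6 d6, mul_nonneg d6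 d7, mul_nonneg d6 d8, mul_nonneg d7 d7, mul_nonneg d7 d8, mul_nonneg d8 d8]
  calc |∑ i, eps j i * a i| = Real.sqrt ((∑ i, eps j i * a i) ^ 2) :=
        (Real.sqrt_sq_eq_abs _).symm
    _ ≤ _ := Real.sqrt_le_sqrt key
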